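/- Let p be a prime and let G be a finite p-group of nilpotency class exactly 2 such that G' has order p^m, G/G' ≅ C_{p^n1} × C_{p^n2} with 0 < n2 ≤ n1, and the pair (p^(m+n1-s1), p^(m+n2-s2)) is the maximum, with respect to the lexicographical order, of the set of pairs (|g1|,|g2|) where (g1,g2) ranges over all pairs of elements of G such that G/G' is the internal direct product of the cyclic subgroups generated by the images of g1 and g2, with the image of g_i having order p^(n_i). Then G is isomorphic to G_p(m,n1,n2,s1,s2). -/

import Mathlib

/-- The set of relators for the presented group `G_p(m,n1,n2,s1,s2)` on two generators
`b1, b2`, with `a = [b2,b1] = b2⁻¹ * b1⁻¹ * b2 * b1`: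
`a ^ p^m = 1`, `[b1,a] = 1`, `[b2,a] = 1`, `b1 ^ p^n1 = a ^ p^s1`, `b2 ^ p^n2 = a ^ p^s2`. -/
def pgRels (p m n1 n2 s1 s2 : ℕ) : Set (FreeGroup (Fin 2)) :=
  let b1 : FreeGroup (Fin 2) := FreeGroup.of 0
  let b2 : FreeGroup (Fin 2) := FreeGroup.of 1
  let a : FreeGroup (Fin 2) := b2⁻¹ * b1⁻¹ * b2 * b1
  {a ^ p ^ m,
   b1⁻¹ * a⁻¹ * b1 * a,
   b2⁻¹ * a⁻¹ * b2 * a,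
   b1 ^ p ^ n1 * (a ^ p ^ s1)⁻¹,
   b2 ^ p ^ n2 * (a ^ p ^ s2)⁻¹}

/-- The group `G_p(m,n1,n2,s1,s2)` given by the presentation
`⟨b1, b2 ∣ [b2,b1]^(p^m) = [b1,[b2,b1]] = [b2,[b2,b1]] = 1,
  b1^(p^n1) = [b2,b1]^(p^s1), b2^(p^n2) = [b2,b1]^(p^s2)⟩`. -/
abbrev GG (p m n1 n2 s1 s2 : ℕ) : Type := PresentedGroup (pgRels p m n1 n2 s1 s2)

/-- `GoodPair p n1 n2 g1 g2` says that the images `x1, x2` of `g1, g2` in the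
abelianization `G/G'` realize `G/G'` as the internal direct product
`⟨x1⟩ × ⟨x2⟩` with `x_i` of order `p^(n_i)`. -/
def GoodPair (p n1 n2 : ℕ) {G : Type*} [Group G] (g1 g2 : G) : Prop :=
  Subgroup.closure {Abelianization.of g1} ⊔ Subgroup.closure {Abelianization.of g2} = ⊤ ∧
  Subgroup.closure {Abelianization.of g1} ⊓ Subgroup.closure {Abelianization.of g2} = ⊥ ∧
  orderOf (Abelianization.of g1) = p ^ n1 ∧ orderOf (Abelianization.of g2) = p ^ n2

/-- `(A, B)` is the maximum, in the lexicographic order, of the set of pairs of orders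
`(|g1|, |g2|)` where `(g1, g2)` ranges over the pairs with `GoodPair p n1 n2 g1 g2`. -/
def IsLexMaxOrders (G : Type*) [Group G] (p n1 n2 A B : ℕ) : Prop :=
  (∃ b1 b2 : G, GoodPair p n1 n2 b1 b2 ∧ orderOf b1 = A ∧ orderOf b2 = B) ∧
  ∀ g1 g2 : G, GoodPair p n1 n2 g1 g2 →
    orderOf g1 < A ∨ (orderOf g1 = A ∧ orderOf g2 ≤ B)



open scoped commutatorElement

section AuxHelpers
variable {H : Type*} [Group H]

lemma swap_pow {x y c : H} (h : y * x = x * y * c) (hcx : Commute c x) (hcy : Commute c y) :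
    ∀ i j : ℕ, y ^ j * x ^ i = x ^ i * y ^ j * c ^ (i * j) := by
  have step1 : ∀ i : ℕ, y * x ^ i = x ^ i * y * c ^ i := by
    intro i
    induction i with
    | zero => simp
    | succ i ih =>
      calc y * x ^ (i+1) = (y * x ^ i) * x := by rw [pow_succ, mul_assoc]
        _ = x ^ i * y * c ^ i * x := by rw [ih]
        _ = x ^ i * y * x * c ^ i := by
            rw [mul_assoc (x ^ i * y), mul_assoc (x ^ i * y), (hcx.pow_left i).eq]
        _ = x ^ i * (x * y * c) * c ^ i := by rw [mul_assoc (x ^ i), h]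
        _ = x ^ (i+1) * y * c ^ (i+1) := by rw [pow_succ, pow_succ]; group
  intro i j
  induction j with
  | zero => simp
  | succ j ih =>
    calc y ^ (j+1) * x ^ i = y * (y ^ j * x ^ i) := by rw [pow_succ', mul_assoc]
      _ = y * (x ^ i * y ^ j * c ^ (i*j)) := by rw [ih]
      _ = (y * x ^ i) * y ^ j * c ^ (i*j) := by group
      _ = (x ^ i * y * c ^ i) * y ^ j * c ^ (i*j) := by rw [step1]
      _ = x ^ i * y * (c ^ i * y ^ j) * c ^ (i*j) := by group
      _ = x ^ i * y * (y ^ j * c ^ i) * c ^ (i*j) := by rw [((hcy.pow_left i).pow_right j).eq]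
      _ = x ^ i * y ^ (j+1) * c ^ (i * (j+1)) := by
          rw [pow_succ', Nat.mul_succ, pow_add]; group

lemma comm_of_swap {x y c : H} (h : y * x = x * y * c) : y⁻¹ * x⁻¹ * y * x = c := by
  have h2 : y⁻¹ * x⁻¹ * (y * x) = c := by rw [h]; group
  rw [← h2]; group


lemma comm_central {c d : H} (hc : ∀ g, Commute c g) (hd : ∀ g, Commute d g) (x y : H) :
    ⁅x * c, y * d⁆ = ⁅x, y⁆ := by
  simp only [commutatorElement_def, mul_inv_rev]
  calc x * c * (y * d) * (c⁻¹ * x⁻¹) * (d⁻¹ * y⁻¹)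
      = x * (c * y) * (d * c⁻¹) * (x⁻¹ * d⁻¹) * y⁻¹ := by group
    _ = x * (y * c) * (c⁻¹ * d) * (d⁻¹ * x⁻¹) * y⁻¹ := by
        rw [(hc y).eq, ((hd c⁻¹).eq), ← ((hd x⁻¹).inv_left.eq)]
    _ = x * y * x⁻¹ * y⁻¹ := by group

lemma comm_formula {g1 g2 a c d : H} (hswap : g2 * g1 = g1 * g2 * a)
    (ha : ∀ g, Commute a g) (hc : ∀ g, Commute c g) (hd : ∀ g, Commute d g) (i j k l : ℕ) :
    ⁅g1^i * g2^j * c, g1^k * g2^l * d⁆ = a^(k*j) * (a^(i*l))⁻¹ := by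
  rw [comm_central hc hd]
  have hsw := swap_pow hswap (ha g1) (ha g2)
  have e1 : (g1^i * g2^j) * (g1^k * g2^l) = g1^(i+k) * g2^(j+l) * a^(k*j) := by
    calc (g1^i * g2^j) * (g1^k * g2^l) = g1^i * (g2^j * g1^k) * g2^l := by group
      _ = g1^i * (g1^k * g2^j * a^(k*j)) * g2^l := by rw [hsw]
      _ = g1^(i+k) * g2^j * (a^(k*j) * g2^l) := by rw [pow_add]; group
      _ = g1^(i+k) * g2^j * (g2^l * a^(k*j)) := by rw [((ha g2).pow_left (k*j)).pow_right l |>.eq]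
      _ = g1^(i+k) * g2^(j+l) * a^(k*j) := by rw [pow_add]; group
  have e2 : (g1^k * g2^l) * (g1^i * g2^j) = g1^(i+k) * g2^(j+l) * a^(i*l) := by
    calc (g1^k * g2^l) * (g1^i * g2^j) = g1^k * (g2^l * g1^i) * g2^j := by group
      _ = g1^k * (g1^i * g2^l * a^(i*l)) * g2^j := by rw [hsw]
      _ = g1^(k+i) * g2^l * (a^(i*l) * g2^j) := by rw [pow_add]; group
      _ = g1^(k+i) * g2^l * (g2^j * a^(i*l)) := by rw [((ha g2).pow_left (i*l)).pow_right j |>.eq]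
      _ = g1^(i+k) * g2^(j+l) * a^(i*l) := by rw [Nat.add_comm k i]; group
  have e3 : ⁅g1^i * g2^j, g1^k * g2^l⁆
      = ((g1^i * g2^j) * (g1^k * g2^l)) * ((g1^k * g2^l) * (g1^i * g2^j))⁻¹ := by
    rw [commutatorElement_def]; group
  rw [e3, e1, e2]
  set W := g1^(i+k) * g2^(j+l) with hW
  have haW : Commute (a^(k*j) * (a^(i*l))⁻¹) W := (((ha W).pow_left (k*j)).mul_left (((ha W).pow_left (i*l)).inv_left))
  calc W * a^(k*j) * (W * a^(i*l))⁻¹ = W * (a^(k*j) * (a^(i*l))⁻¹) * W⁻¹ := by group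
    _ = (a^(k*j) * (a^(i*l))⁻¹) * W * W⁻¹ := by rw [haW.eq]
    _ = a^(k*j) * (a^(i*l))⁻¹ := by group
lemma zpow_eq_pow_nat [Finite H] (g : H) (z : ℤ) : ∃ n : ℕ, g ^ z = g ^ n := by
  refine ⟨(z % (orderOf g : ℤ)).toNat, ?_⟩
  have hpos : (0 : ℤ) < (orderOf g : ℤ) := by exact_mod_cast orderOf_pos g
  rw [← zpow_natCast, Int.toNat_of_nonneg (Int.emod_nonneg z hpos.ne'), zpow_mod_orderOf]

lemma unit_extract [Finite H] {p M S N t : ℕ} (hp : p.Prime) {g a : H}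
    (horda : orderOf a = p ^ M) (hordg : orderOf g = p ^ (M + N - S))
    (hSM : S ≤ M) (hNle : N ≤ M + N - S)
    (ht : g ^ (p ^ N) = a ^ t) :
    ∃ u : ℕ, ¬ p ∣ u ∧ g ^ (p ^ N) = a ^ (p ^ S * u) := by
  have hp1 : 1 < p := hp.one_lt
  have hppos : 0 < p := hp.pos
  -- order of a^t
  have h1 : orderOf (a ^ t) = p ^ (M - S) := by
    rw [← ht, orderOf_pow, hordg, Nat.gcd_eq_right (Nat.pow_dvd_pow p hNle),
      Nat.pow_div hNle hppos]
    congr 1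
    omega
  have h2 : orderOf (a ^ t) = p ^ M / Nat.gcd (p ^ M) t := by
    rw [orderOf_pow, horda]
  have hgcd : Nat.gcd (p ^ M) t = p ^ S := by
    have hdg : Nat.gcd (p ^ M) t ∣ p ^ M := Nat.gcd_dvd_left _ _
    have hmul : Nat.gcd (p ^ M) t * (p ^ M / Nat.gcd (p ^ M) t) = p ^ M :=
      Nat.mul_div_cancel' hdg
    rw [← h2, h1] at hmul
    have : p ^ S * p ^ (M - S) = p ^ M := by
      rw [← pow_add]; congr 1; omega
    have hMS : 0 < p ^ (M - S) := Nat.pow_pos hppos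
    exact Nat.eq_of_mul_eq_mul_right hMS (by rw [hmul, ← this])
  have hdvdt : p ^ S ∣ t := hgcd ▸ Nat.gcd_dvd_right _ _
  by_cases hcase : p ∣ t / p ^ S
  · -- then S = M and everything collapses
    refine ⟨1, fun h => hp1.ne' (Nat.dvd_one.mp h), ?_⟩
    have hSM' : S = M := by
      by_contra hne
      have hSlt : S < M := lt_of_le_of_ne hSM hne
      have : p ^ (S + 1) ∣ t := by
        obtain ⟨q, hq⟩ := hdvdt
        obtain ⟨r, hr⟩ := hcase
        rw [hq, Nat.mul_div_cancel_left q (Nat.pow_pos hppos)] at hr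
        exact ⟨r, by rw [hq, hr, pow_succ]; ring⟩
      have : p ^ (S + 1) ∣ Nat.gcd (p ^ M) t :=
        Nat.dvd_gcd (Nat.pow_dvd_pow p (by omega)) this
      rw [hgcd] at this
      have := (Nat.pow_dvd_pow_iff_le_right hp1).mp this
      omega
    have hapm : a ^ p ^ M = 1 := by rw [← horda, pow_orderOf_eq_one]
    obtain ⟨q, hq⟩ := hdvdt
    rw [hSM'] at hq
    rw [mul_one, ht, hSM', hq, pow_mul, hapm, one_pow]
  · refine ⟨t / p ^ S, hcase, ?_⟩
    rw [Nat.mul_div_cancel' hdvdt, ht]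

lemma pow_inv_eq {g : H} {L : ℕ} (hL : 0 < L) (hg : g ^ L = 1) (i : ℕ) :
    (g ^ i)⁻¹ = g ^ (i * (L - 1)) := by
  apply inv_eq_of_mul_eq_one_right
  rw [← pow_add, show i + i * (L - 1) = i * L by
    obtain ⟨L', rfl⟩ := Nat.exists_eq_succ_of_ne_zero hL.ne'
    rw [Nat.succ_sub_one, Nat.mul_succ]
    omega]
  rw [Nat.mul_comm i L, pow_mul, hg, one_pow]

lemma gen_surj (B1 B2 A0 : H) (N1 N2 M S1 S2 : ℕ) (hM : 0 < M) (hN1 : 0 < N1) (hN2 : 0 < N2)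
    (hgen : Subgroup.closure {B1, B2} = ⊤)
    (hswap : B2 * B1 = B1 * B2 * A0)
    (c1 : Commute A0 B1) (c2 : Commute A0 B2)
    (hAm : A0 ^ M = 1) (e1 : B1 ^ N1 = A0 ^ S1) (e2 : B2 ^ N2 = A0 ^ S2) :
    Function.Surjective (fun t : Fin N1 × Fin N2 × Fin M =>
      B1 ^ (t.1 : ℕ) * B2 ^ (t.2.1 : ℕ) * A0 ^ (t.2.2 : ℕ)) := by
  have hA1 : ∀ n m : ℕ, A0 ^ n * B1 ^ m = B1 ^ m * A0 ^ n :=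
    fun n m => ((c1.pow_left n).pow_right m).eq
  have hA2 : ∀ n m : ℕ, A0 ^ n * B2 ^ m = B2 ^ m * A0 ^ n :=
    fun n m => ((c2.pow_left n).pow_right m).eq
  have hsw := swap_pow hswap c1 c2
  have mulf : ∀ i j k i2 j2 k2 : ℕ, (B1^i * B2^j * A0^k) * (B1^i2 * B2^j2 * A0^k2)
      = B1^(i+i2) * B2^(j+j2) * A0^(i2*j + k + k2) := by
    intro i j k i2 j2 k2
    calc (B1^i * B2^j * A0^k) * (B1^i2 * B2^j2 * A0^k2)
        = B1^i * B2^j * (A0^k * B1^i2) * (B2^j2 * A0^k2) := by group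
      _ = B1^i * B2^j * (B1^i2 * A0^k) * (B2^j2 * A0^k2) := by rw [hA1 k i2]
      _ = B1^i * (B2^j * B1^i2) * ((A0^k * B2^j2) * A0^k2) := by group
      _ = B1^i * (B1^i2 * B2^j * A0^(i2*j)) * (B2^j2 * A0^k * A0^k2) := by
          rw [hsw, hA2 k j2]
      _ = B1^(i+i2) * B2^j * ((A0^(i2*j) * B2^j2) * (A0^k * A0^k2)) := by
          rw [pow_add]; group
      _ = B1^(i+i2) * B2^j * ((B2^j2 * A0^(i2*j)) * (A0^k * A0^k2)) := by
          rw [hA2 (i2*j) j2]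
      _ = B1^(i+i2) * B2^(j+j2) * A0^(i2*j + k + k2) := by
          rw [pow_add B2, pow_add A0 (i2*j + k), pow_add A0 (i2*j)]; group
  have revf : ∀ K J I : ℕ, A0^K * B2^J * B1^I = B1^I * B2^J * A0^(K + I*J) := by
    intro K J I
    calc A0^K * B2^J * B1^I = A0^K * (B2^J * B1^I) := by group
      _ = A0^K * (B1^I * B2^J * A0^(I*J)) := by rw [hsw]
      _ = (A0^K * B1^I) * B2^J * A0^(I*J) := by group
      _ = (B1^I * A0^K) * B2^J * A0^(I*J) := by rw [hA1 K I]
      _ = B1^I * (A0^K * B2^J) * A0^(I*J) := by group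
      _ = B1^I * (B2^J * A0^K) * A0^(I*J) := by rw [hA2 K J]
      _ = B1^I * B2^J * A0^(K + I*J) := by rw [pow_add]; group
  have hB1ord : B1 ^ (N1 * M) = 1 := by
    rw [pow_mul, e1, ← pow_mul, mul_comm S1 M, pow_mul, hAm, one_pow]
  have hB2ord : B2 ^ (N2 * M) = 1 := by
    rw [pow_mul, e2, ← pow_mul, mul_comm S2 M, pow_mul, hAm, one_pow]
  have hNM1 : 0 < N1 * M := Nat.mul_pos hN1 hM
  have hNM2 : 0 < N2 * M := Nat.mul_pos hN2 hM
  let T : Subgroup H :=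
    { carrier := {x | ∃ i j k : ℕ, x = B1^i * B2^j * A0^k}
      one_mem' := ⟨0, 0, 0, by simp⟩
      mul_mem' := by
        rintro x y ⟨i, j, k, rfl⟩ ⟨i2, j2, k2, rfl⟩
        exact ⟨i+i2, j+j2, i2*j + k + k2, mulf i j k i2 j2 k2⟩
      inv_mem' := by
        rintro x ⟨i, j, k, rfl⟩
        refine ⟨i*(N1*M-1), j*(N2*M-1),
          (k*(M-1)) + (i*(N1*M-1))*(j*(N2*M-1)), ?_⟩
        calc (B1^i * B2^j * A0^k)⁻¹
            = (A0^k)⁻¹ * ((B2^j)⁻¹ * (B1^i)⁻¹) := by group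
          _ = A0^(k*(M-1)) * (B2^(j*(N2*M-1)) * B1^(i*(N1*M-1))) := by
              rw [pow_inv_eq hM hAm, pow_inv_eq hNM2 hB2ord, pow_inv_eq hNM1 hB1ord]
          _ = A0^(k*(M-1)) * B2^(j*(N2*M-1)) * B1^(i*(N1*M-1)) := by group
          _ = B1^(i*(N1*M-1)) * B2^(j*(N2*M-1))
                * A0^(k*(M-1) + (i*(N1*M-1))*(j*(N2*M-1))) := revf _ _ _ }
  have hT : ∀ x : H, ∃ i j k : ℕ, x = B1^i * B2^j * A0^k := by
    intro x
    have hle : Subgroup.closure {B1, B2} ≤ T := by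
      rw [Subgroup.closure_le]
      rintro y (rfl | rfl)
      · exact ⟨1, 0, 0, by simp⟩
      · exact ⟨0, 1, 0, by simp⟩
    exact hle (hgen ▸ Subgroup.mem_top x)
  have red1 : ∀ i j k : ℕ, B1^i * B2^j * A0^k
      = B1^(i % N1) * B2^j * A0^(S1*(i/N1) + k) := by
    intro i j k
    have hBi : B1^i = B1^(i % N1) * A0^(S1*(i/N1)) := by
      conv_lhs => rw [← Nat.mod_add_div i N1]
      rw [pow_add, pow_mul, e1, ← pow_mul]
    calc B1^i * B2^j * A0^k = B1^(i % N1) * (A0^(S1*(i/N1)) * B2^j) * A0^k := by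
          rw [hBi]; group
      _ = B1^(i % N1) * (B2^j * A0^(S1*(i/N1))) * A0^k := by rw [hA2]
      _ = B1^(i % N1) * B2^j * A0^(S1*(i/N1) + k) := by rw [pow_add]; group
  have red2 : ∀ r j k : ℕ, B1^r * B2^j * A0^k
      = B1^r * B2^(j % N2) * A0^(S2*(j/N2) + k) := by
    intro r j k
    have hBj : B2^j = B2^(j % N2) * A0^(S2*(j/N2)) := by
      conv_lhs => rw [← Nat.mod_add_div j N2]
      rw [pow_add, pow_mul, e2, ← pow_mul]
    rw [hBj, pow_add]; group
  have red3 : ∀ r s k : ℕ, B1^r * B2^s * A0^k = B1^r * B2^s * A0^(k % M) := by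
    intro r s k
    have : A0^k = A0^(k % M) := by
      conv_lhs => rw [← Nat.mod_add_div k M]
      rw [pow_add, pow_mul, hAm, one_pow, mul_one]
    rw [this]
  intro x
  obtain ⟨i, j, k, hx⟩ := hT x
  refine ⟨⟨⟨i % N1, Nat.mod_lt _ hN1⟩, ⟨j % N2, Nat.mod_lt _ hN2⟩,
    ⟨(S2*(j/N2) + (S1*(i/N1) + k)) % M, Nat.mod_lt _ hM⟩⟩, ?_⟩
  simp only
  rw [hx, red1 i j k, red2 (i % N1) j (S1*(i/N1) + k), red3]
  rw [Nat.mod_mod_of_dvd _ dvd_rfl]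
  exact (red3 _ _ _).symm

lemma GG_facts (p m n1 n2 s1 s2 : ℕ) :
    ∃ B1 B2 A0 : GG p m n1 n2 s1 s2,
      Subgroup.closure {B1, B2} = ⊤ ∧ B2 * B1 = B1 * B2 * A0 ∧
      Commute A0 B1 ∧ Commute A0 B2 ∧
      A0 ^ p ^ m = 1 ∧ B1 ^ p ^ n1 = A0 ^ p ^ s1 ∧ B2 ^ p ^ n2 = A0 ^ p ^ s2 := by
  set rels := pgRels p m n1 n2 s1 s2 with hrels
  let K := PresentedGroup.mk rels
  let B1 : GG p m n1 n2 s1 s2 := K (FreeGroup.of 0)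
  let B2 : GG p m n1 n2 s1 s2 := K (FreeGroup.of 1)
  let A0 : GG p m n1 n2 s1 s2 := B2⁻¹ * B1⁻¹ * B2 * B1
  have hmk : ∀ r ∈ rels, K r = 1 := fun r hr =>
    (QuotientGroup.eq_one_iff r).mpr (Subgroup.subset_normalClosure hr)
  have hKa : K ((FreeGroup.of 1)⁻¹ * (FreeGroup.of 0)⁻¹ * FreeGroup.of 1 * FreeGroup.of 0)
      = A0 := by
    simp only [map_mul, map_inv]; rfl
  have r1 : A0 ^ p ^ m = 1 := by
    have := hmk _ (show ((FreeGroup.of 1)⁻¹ * (FreeGroup.of 0)⁻¹ * FreeGroup.of 1 *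
      FreeGroup.of 0 : FreeGroup (Fin 2)) ^ p ^ m ∈ rels by
        rw [hrels]; simp [pgRels])
    rwa [map_pow, hKa] at this
  have r2' : B1⁻¹ * A0⁻¹ * B1 * A0 = 1 := by
    have := hmk _ (show ((FreeGroup.of 0)⁻¹ * ((FreeGroup.of 1)⁻¹ * (FreeGroup.of 0)⁻¹ *
      FreeGroup.of 1 * FreeGroup.of 0)⁻¹ * FreeGroup.of 0 * ((FreeGroup.of 1)⁻¹ *
      (FreeGroup.of 0)⁻¹ * FreeGroup.of 1 * FreeGroup.of 0) : FreeGroup (Fin 2)) ∈ rels by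
        rw [hrels]; simp [pgRels])
    simpa only [map_mul, map_inv, hKa] using this
  have r3' : B2⁻¹ * A0⁻¹ * B2 * A0 = 1 := by
    have := hmk _ (show ((FreeGroup.of 1)⁻¹ * ((FreeGroup.of 1)⁻¹ * (FreeGroup.of 0)⁻¹ *
      FreeGroup.of 1 * FreeGroup.of 0)⁻¹ * FreeGroup.of 1 * ((FreeGroup.of 1)⁻¹ *
      (FreeGroup.of 0)⁻¹ * FreeGroup.of 1 * FreeGroup.of 0) : FreeGroup (Fin 2)) ∈ rels by
        rw [hrels]; simp [pgRels])
    simpa only [map_mul, map_inv, hKa] using this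
  have r4 : B1 ^ p ^ n1 = A0 ^ p ^ s1 := by
    have := hmk _ (show ((FreeGroup.of 0 : FreeGroup (Fin 2)) ^ p ^ n1 *
      (((FreeGroup.of 1)⁻¹ * (FreeGroup.of 0)⁻¹ * FreeGroup.of 1 * FreeGroup.of 0) ^ p ^ s1)⁻¹)
      ∈ rels by rw [hrels]; simp [pgRels])
    rw [map_mul, map_inv, map_pow, map_pow, hKa] at this
    exact mul_inv_eq_one.mp this
  have r5 : B2 ^ p ^ n2 = A0 ^ p ^ s2 := by
    have := hmk _ (show ((FreeGroup.of 1 : FreeGroup (Fin 2)) ^ p ^ n2 *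
      (((FreeGroup.of 1)⁻¹ * (FreeGroup.of 0)⁻¹ * FreeGroup.of 1 * FreeGroup.of 0) ^ p ^ s2)⁻¹)
      ∈ rels by rw [hrels]; simp [pgRels])
    rw [map_mul, map_inv, map_pow, map_pow, hKa] at this
    exact mul_inv_eq_one.mp this
  have c1 : Commute A0 B1 := by
    have h' : A0⁻¹ * B1 * A0 = B1 := by
      have : A0⁻¹ * B1 * A0 = B1 * (B1⁻¹ * A0⁻¹ * B1 * A0) := by group
      rw [this, r2', mul_one]
    have : B1 * A0 = A0 * (A0⁻¹ * B1 * A0) := by group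
    rw [h'] at this
    exact this.symm
  have c2 : Commute A0 B2 := by
    have h' : A0⁻¹ * B2 * A0 = B2 := by
      have : A0⁻¹ * B2 * A0 = B2 * (B2⁻¹ * A0⁻¹ * B2 * A0) := by group
      rw [this, r3', mul_one]
    have : B2 * A0 = A0 * (A0⁻¹ * B2 * A0) := by group
    rw [h'] at this
    exact this.symm
  have hswap : B2 * B1 = B1 * B2 * A0 := by
    show B2 * B1 = B1 * B2 * (B2⁻¹ * B1⁻¹ * B2 * B1)
    group
  have hgen : Subgroup.closure {B1, B2} = ⊤ := by
    apply le_antisymm le_top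
    rw [← PresentedGroup.closure_range_of rels]
    apply Subgroup.closure_mono
    rintro _ ⟨x, rfl⟩
    fin_cases x
    · exact Or.inl rfl
    · exact Or.inr rfl
  exact ⟨B1, B2, A0, hgen, hswap, c1, c2, r1, r4, r5⟩

end AuxHelpers

section Gside
variable {G : Type*} [Group G] [Finite G]

/-- decomposition of an arbitrary element modulo the commutator subgroup -/
lemma decomp (y1 y2 : G)
    (hsup : Subgroup.closure {Abelianization.of y1} ⊔ Subgroup.closure {Abelianization.of y2}
      = ⊤) (x : G) :
    ∃ i j : ℕ, ∃ c ∈ commutator G, x = y1 ^ i * y2 ^ j * c := by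
  have hx : Abelianization.of x ∈ (⊤ : Subgroup (Abelianization G)) := Subgroup.mem_top _
  rw [← hsup, ← Subgroup.zpowers_eq_closure, ← Subgroup.zpowers_eq_closure] at hx
  obtain ⟨y, ⟨zi, rfl⟩, z, ⟨zj, rfl⟩, hyz⟩ := Subgroup.mem_sup.mp hx
  obtain ⟨i, hi⟩ := zpow_eq_pow_nat (Abelianization.of y1) zi
  obtain ⟨j, hj⟩ := zpow_eq_pow_nat (Abelianization.of y2) zj
  refine ⟨i, j, (y1 ^ i * y2 ^ j)⁻¹ * x, ?_, by group⟩
  have heq : Abelianization.of (y1 ^ i * y2 ^ j) = Abelianization.of x := by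
    rw [map_mul, map_pow, map_pow, ← hi, ← hj]
    exact hyz
  have h9 : Abelianization.of ((y1 ^ i * y2 ^ j)⁻¹ * x) = 1 := by
    rw [map_mul, map_inv, heq, inv_mul_cancel]
  exact (QuotientGroup.eq_one_iff (N := commutator G) _).mp h9

theorem G_side (p : ℕ) (hp : p.Prime)
    (hclass : commutator G ≤ Subgroup.center G)
    (m n1 n2 s1 s2 : ℕ)
    (hm : Nat.card ↥(commutator G) = p ^ m)
    (hn2 : 0 < n2) (hn12 : n2 ≤ n1)
    (g1 g2 : G) (hgp : GoodPair p n1 n2 g1 g2)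
    (ho1 : orderOf g1 = p ^ (m + n1 - s1)) (ho2 : orderOf g2 = p ^ (m + n2 - s2)) :
    ∃ h1 h2 A : G, Subgroup.closure {h1, h2} = ⊤ ∧ h2 * h1 = h1 * h2 * A ∧
      (∀ g : G, Commute A g) ∧
      A ^ p ^ m = 1 ∧ h1 ^ p ^ n1 = A ^ p ^ s1 ∧ h2 ^ p ^ n2 = A ^ p ^ s2 := by
  obtain ⟨hsup, -, hx1, hx2⟩ := hgp
  have hp1 : 1 < p := hp.one_lt
  set a : G := g2⁻¹ * g1⁻¹ * g2 * g1 with ha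
  have haC : a ∈ commutator G := by
    have : a = ⁅g2⁻¹, g1⁻¹⁆ := by rw [commutatorElement_def, inv_inv, inv_inv]
    rw [this, commutator_def]
    exact Subgroup.commutator_mem_commutator (Subgroup.mem_top _) (Subgroup.mem_top _)
  have hacen : ∀ g : G, Commute a g := fun g =>
    ((Subgroup.mem_center_iff.mp (hclass haC)) g).symm
  have hswap0 : g2 * g1 = g1 * g2 * a := by rw [ha]; group
  -- the commutator subgroup is cyclic generated by a
  have hcomm_le : commutator G ≤ Subgroup.zpowers a := by
    rw [commutator_def, Subgroup.commutator_le]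
    rintro x - y -
    obtain ⟨i, j, c, hc, rfl⟩ := decomp g1 g2 hsup x
    obtain ⟨k, l, d, hd, rfl⟩ := decomp g1 g2 hsup y
    have hccen : ∀ g : G, Commute c g := fun g =>
      ((Subgroup.mem_center_iff.mp (hclass hc)) g).symm
    have hdcen : ∀ g : G, Commute d g := fun g =>
      ((Subgroup.mem_center_iff.mp (hclass hd)) g).symm
    rw [comm_formula hswap0 hacen hccen hdcen i j k l]
    exact Subgroup.mul_mem _ ((Subgroup.zpowers a).pow_mem (Subgroup.mem_zpowers a) _)
      (Subgroup.inv_mem _ ((Subgroup.zpowers a).pow_mem (Subgroup.mem_zpowers a) _))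
  have hza : Subgroup.zpowers a = commutator G :=
    le_antisymm (Subgroup.zpowers_le.mpr haC) hcomm_le
  have horda : orderOf a = p ^ m := by
    rw [← Nat.card_zpowers, hza, hm]
  have hapm : a ^ p ^ m = 1 := by rw [← horda, pow_orderOf_eq_one]
  -- bounds on s1 s2
  have hdvd1 : p ^ n1 ∣ orderOf g1 := by
    rw [← hx1]; exact orderOf_map_dvd Abelianization.of g1
  have hdvd2 : p ^ n2 ∣ orderOf g2 := by
    rw [← hx2]; exact orderOf_map_dvd Abelianization.of g2
  rw [ho1] at hdvd1
  rw [ho2] at hdvd2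
  have hle1 : n1 ≤ m + n1 - s1 := (Nat.pow_dvd_pow_iff_le_right hp1).mp hdvd1
  have hle2 : n2 ≤ m + n2 - s2 := (Nat.pow_dvd_pow_iff_le_right hp1).mp hdvd2
  have hs1 : s1 ≤ m := by omega
  have hs2 : s2 ≤ m := by omega
  -- extract t1, t2
  have hker1 : g1 ^ p ^ n1 ∈ Subgroup.zpowers a := by
    rw [hza]
    have h9 : Abelianization.of (g1 ^ p ^ n1) = 1 := by
      rw [map_pow, ← hx1, pow_orderOf_eq_one]
    exact (QuotientGroup.eq_one_iff (N := commutator G) _).mp h9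
  have hker2 : g2 ^ p ^ n2 ∈ Subgroup.zpowers a := by
    rw [hza]
    have h9 : Abelianization.of (g2 ^ p ^ n2) = 1 := by
      rw [map_pow, ← hx2, pow_orderOf_eq_one]
    exact (QuotientGroup.eq_one_iff (N := commutator G) _).mp h9
  obtain ⟨z1, hw1⟩ := hker1
  obtain ⟨z2, hw2⟩ := hker2
  have hz1 : a ^ z1 = g1 ^ p ^ n1 := hw1
  have hz2 : a ^ z2 = g2 ^ p ^ n2 := hw2
  obtain ⟨t1, ht1⟩ := zpow_eq_pow_nat a z1
  obtain ⟨t2, ht2⟩ := zpow_eq_pow_nat a z2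
  rw [ht1] at hz1
  rw [ht2] at hz2
  obtain ⟨u1, hu1, he1⟩ := unit_extract hp horda ho1 hs1 hle1 hz1.symm
  obtain ⟨u2, hu2, he2⟩ := unit_extract hp horda ho2 hs2 hle2 hz2.symm
  -- the adjusted pair
  refine ⟨g1 ^ u2, g2 ^ u1, a ^ (u2 * u1), ?_, ?_, ?_, ?_, ?_, ?_⟩
  · -- generation
    have himg : ∀ (g : G) (u nn : ℕ), ¬ p ∣ u → orderOf (Abelianization.of g) = p ^ nn →
        0 < nn → Subgroup.closure {Abelianization.of (g ^ u)}
          = Subgroup.closure {Abelianization.of g} := by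
      intro g u nn hu hord hnn
      rw [map_pow, ← Subgroup.zpowers_eq_closure, ← Subgroup.zpowers_eq_closure]
      apply le_antisymm
      · exact Subgroup.zpowers_le.mpr (Subgroup.pow_mem _ (Subgroup.mem_zpowers _) _)
      · apply Subgroup.zpowers_le.mpr
        have hco : u.Coprime (p ^ nn) :=
          Nat.Coprime.pow_right nn ((hp.coprime_iff_not_dvd).mpr hu).symm
        have h1lt : 1 < p ^ nn := Nat.one_lt_pow (by omega) hp1
        obtain ⟨v, -, hv⟩ := Nat.exists_mul_mod_eq_one_of_coprime hco h1lt
        have hvv : ((Abelianization.of g) ^ u) ^ v = Abelianization.of g := by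
          rw [← pow_mul, ← pow_mod_orderOf, hord, hv, pow_one]
        exact Subgroup.mem_zpowers_iff.mpr ⟨(v : ℤ), by rw [zpow_natCast]; exact hvv⟩
    have hsup' : Subgroup.closure {Abelianization.of (g1 ^ u2)}
        ⊔ Subgroup.closure {Abelianization.of (g2 ^ u1)} = ⊤ := by
      rw [himg g1 u2 n1 hu2 hx1 (by omega), himg g2 u1 n2 hu1 hx2 hn2, hsup]
    set Hc := Subgroup.closure {g1 ^ u2, g2 ^ u1} with hHc
    have hmem1 : g1 ^ u2 ∈ Hc := Subgroup.subset_closure (Set.mem_insert _ _)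
    have hmem2 : g2 ^ u1 ∈ Hc := Subgroup.subset_closure (Set.mem_insert_of_mem _ rfl)
    have hcommH : commutator G ≤ Hc := by
      rw [commutator_def, Subgroup.commutator_le]
      rintro x - y -
      obtain ⟨i, j, c, hc, rfl⟩ := decomp _ _ hsup' x
      obtain ⟨k, l, d, hd, rfl⟩ := decomp _ _ hsup' y
      have hccen : ∀ g : G, Commute c g := fun g =>
        ((Subgroup.mem_center_iff.mp (hclass hc)) g).symm
      have hdcen : ∀ g : G, Commute d g := fun g =>
        ((Subgroup.mem_center_iff.mp (hclass hd)) g).symm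
      rw [comm_central hccen hdcen]
      have hxin : (g1 ^ u2) ^ i * (g2 ^ u1) ^ j ∈ Hc :=
        Hc.mul_mem (Hc.pow_mem hmem1 i) (Hc.pow_mem hmem2 j)
      have hyin : (g1 ^ u2) ^ k * (g2 ^ u1) ^ l ∈ Hc :=
        Hc.mul_mem (Hc.pow_mem hmem1 k) (Hc.pow_mem hmem2 l)
      rw [commutatorElement_def]
      exact Hc.mul_mem (Hc.mul_mem (Hc.mul_mem hxin hyin) (Hc.inv_mem hxin)) (Hc.inv_mem hyin)
    apply le_antisymm le_top
    rintro x -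
    obtain ⟨i, j, c, hc, rfl⟩ := decomp _ _ hsup' x
    exact Hc.mul_mem (Hc.mul_mem (Hc.pow_mem hmem1 i) (Hc.pow_mem hmem2 j)) (hcommH hc)
  · exact swap_pow hswap0 (hacen g1) (hacen g2) u2 u1
  · exact fun g => (hacen g).pow_left _
  · rw [← pow_mul, Nat.mul_comm, pow_mul, hapm, one_pow]
  · calc (g1 ^ u2) ^ p ^ n1 = (g1 ^ p ^ n1) ^ u2 := pow_right_comm g1 u2 (p ^ n1)
      _ = (a ^ (p ^ s1 * u1)) ^ u2 := by rw [he1]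
      _ = (a ^ (u2 * u1)) ^ p ^ s1 := by rw [← pow_mul, ← pow_mul]; congr 1; ring
  · calc (g2 ^ u1) ^ p ^ n2 = (g2 ^ p ^ n2) ^ u1 := pow_right_comm g2 u1 (p ^ n2)
      _ = (a ^ (p ^ s2 * u2)) ^ u1 := by rw [he2]
      _ = (a ^ (u2 * u1)) ^ p ^ s2 := by rw [← pow_mul, ← pow_mul]; congr 1; ring

end Gside

/-- If `G` is a finite `p`-group of nilpotency class exactly 2 with `|G'| = p^m`,
`G/G' ≅ C_{p^n1} × C_{p^n2}` (`0 < n2 ≤ n1`), and `(p^(m+n1-s1), p^(m+n2-s2))` is the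
lexicographic maximum of the pairs of orders of suitable generating pairs,
then `G ≅ G_p(m,n1,n2,s1,s2)`. -/
theorem invariants_give_presentation
    (p : ℕ) (hp : p.Prime) (G : Type*) [Group G] [Finite G] (hGp : IsPGroup p G)
    (hclass : commutator G ≤ Subgroup.center G) (hnt : commutator G ≠ ⊥)
    (m n1 n2 s1 s2 : ℕ)
    (hm : Nat.card ↥(commutator G) = p ^ m)
    (hn2 : 0 < n2) (hn12 : n2 ≤ n1)
    (hab : Nonempty (Abelianization G ≃*
      Multiplicative (ZMod (p ^ n1)) × Multiplicative (ZMod (p ^ n2))))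
    (hmax : IsLexMaxOrders G p n1 n2 (p ^ (m + n1 - s1)) (p ^ (m + n2 - s2))) :
    Nonempty (G ≃* GG p m n1 n2 s1 s2) := by
  classical
  obtain ⟨g1, g2, hgp, ho1, ho2⟩ := hmax.1
  obtain ⟨h1, h2, A, hgen, hswap, hAcen, hApm, hr4, hr5⟩ :=
    G_side p hp hclass m n1 n2 s1 s2 hm hn2 hn12 g1 g2 hgp ho1 ho2
  set f : Fin 2 → G := ![h1, h2] with hf
  have l0 : FreeGroup.lift f (FreeGroup.of 0) = h1 := by simp [hf]
  have l1 : FreeGroup.lift f (FreeGroup.of 1) = h2 := by simp [hf]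
  have hA_eq : h2⁻¹ * h1⁻¹ * h2 * h1 = A := comm_of_swap hswap
  have keyA : FreeGroup.lift f
      ((FreeGroup.of 1)⁻¹ * (FreeGroup.of 0)⁻¹ * FreeGroup.of 1 * FreeGroup.of 0) = A := by
    simp only [map_mul, map_inv, l0, l1]
    exact hA_eq
  have hrels : ∀ r ∈ pgRels p m n1 n2 s1 s2, FreeGroup.lift f r = 1 := by
    intro r hr
    simp only [pgRels, Set.mem_insert_iff, Set.mem_singleton_iff] at hr
    rcases hr with rfl | rfl | rfl | rfl | rfl
    · rw [map_pow, keyA, hApm]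
    · simp only [map_mul, map_inv, l0, l1]
      rw [hA_eq]
      have h' : A⁻¹ * h1 = h1 * A⁻¹ := ((hAcen h1).inv_left).eq
      calc h1⁻¹ * A⁻¹ * h1 * A = h1⁻¹ * (A⁻¹ * h1) * A := by group
        _ = h1⁻¹ * (h1 * A⁻¹) * A := by rw [h']
        _ = 1 := by group
    · simp only [map_mul, map_inv, l0, l1]
      rw [hA_eq]
      have h' : A⁻¹ * h2 = h2 * A⁻¹ := ((hAcen h2).inv_left).eq
      calc h2⁻¹ * A⁻¹ * h2 * A = h2⁻¹ * (A⁻¹ * h2) * A := by group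
        _ = h2⁻¹ * (h2 * A⁻¹) * A := by rw [h']
        _ = 1 := by group
    · simp only [map_mul, map_inv, map_pow, l0, l1]
      rw [hA_eq]
      exact mul_inv_eq_one.mpr hr4
    · simp only [map_mul, map_inv, map_pow, l0, l1]
      rw [hA_eq]
      exact mul_inv_eq_one.mpr hr5
  let φ : GG p m n1 n2 s1 s2 →* G := PresentedGroup.toGroup hrels
  have hφ0 : φ (PresentedGroup.of 0) = h1 := by
    rw [PresentedGroup.toGroup.of]; simp [hf]
  have hφ1 : φ (PresentedGroup.of 1) = h2 := by
    rw [PresentedGroup.toGroup.of]; simp [hf]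
  have hφsurj : Function.Surjective φ := by
    rw [← MonoidHom.range_eq_top]
    apply le_antisymm le_top
    rw [← hgen, Subgroup.closure_le]
    rintro x (rfl | rfl)
    · exact ⟨PresentedGroup.of 0, hφ0⟩
    · exact ⟨PresentedGroup.of 1, hφ1⟩
  -- cardinality of GG
  obtain ⟨B1, B2, A0, ggen, gswap, gc1, gc2, gr1, gr4, gr5⟩ := GG_facts p m n1 n2 s1 s2
  have hppos := hp.pos
  have hsurj2 := gen_surj B1 B2 A0 (p ^ n1) (p ^ n2) (p ^ m) (p ^ s1) (p ^ s2)
    (pow_pos hppos m) (pow_pos hppos n1) (pow_pos hppos n2)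
    ggen gswap gc1 gc2 gr1 gr4 gr5
  have hfinGG : Finite (GG p m n1 n2 s1 s2) := Finite.of_surjective _ hsurj2
  have hcard_le : Nat.card (GG p m n1 n2 s1 s2) ≤ p ^ n1 * (p ^ n2 * p ^ m) := by
    have h := Nat.card_le_card_of_surjective _ hsurj2
    simpa using h
  have hcardG : Nat.card G = p ^ n1 * (p ^ n2 * p ^ m) := by
    have hq : Nat.card (G ⧸ commutator G) = p ^ n1 * p ^ n2 := by
      have e := Nat.card_congr hab.some.toEquiv
      have h1' : Nat.card (G ⧸ commutator G) = Nat.card (Abelianization G) := rfl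
      rw [h1', e, Nat.card_prod]
      have hz1 : Nat.card (Multiplicative (ZMod (p ^ n1))) = p ^ n1 := by
        rw [show Nat.card (Multiplicative (ZMod (p ^ n1))) = Nat.card (ZMod (p ^ n1)) from rfl,
          Nat.card_zmod]
      have hz2 : Nat.card (Multiplicative (ZMod (p ^ n2))) = p ^ n2 := by
        rw [show Nat.card (Multiplicative (ZMod (p ^ n2))) = Nat.card (ZMod (p ^ n2)) from rfl,
          Nat.card_zmod]
      rw [hz1, hz2]
    rw [Subgroup.card_eq_card_quotient_mul_card_subgroup (commutator G), hq, hm, Nat.mul_assoc]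
  have hcard_ge : Nat.card G ≤ Nat.card (GG p m n1 n2 s1 s2) :=
    Nat.card_le_card_of_surjective φ hφsurj
  have hcard_eq : Nat.card (GG p m n1 n2 s1 s2) = Nat.card G := by omega
  have hbij : Function.Bijective φ :=
    (Nat.bijective_iff_surjective_and_card φ).mpr ⟨hφsurj, hcard_eq⟩
  exact ⟨(MulEquiv.ofBijective φ hbij).symm⟩
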